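/- Every collection Γ of vertex sets in a 2n-vertex graph consisting of pairwise disjoint sets each of size at most n/(3Δ), where every subcollection U of aggregate size in (n/(6Δ), n/(3Δ)] satisfies |U⁺| ≥ (Δ-1)/2·|U| (U⁺ being U together with its neighborhood), has total size at most 12n/Δ, provided Δ ≥ 3 and the sets in distinct extracted subcollections have disjoint closed neighborhoods. -/

import Mathlib

open Finset

/-- The closed neighborhood `U⁺ = U ∪ ∂U` of a vertex set `U` in a graph `G`. -/
def closedNbhd {V : Type*} [Fintype V] [DecidableEq V] (G : SimpleGraph V)
    [DecidableRel G.Adj] (U : Finset V) : Finset V :=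
  U ∪ Finset.univ.filter (fun v => ∃ u ∈ U, G.Adj u v)

lemma closedNbhd_biUnion {V : Type*} [Fintype V] [DecidableEq V] (G : SimpleGraph V)
    [DecidableRel G.Adj] (S : Finset (Finset V)) :
    closedNbhd G (S.biUnion id) = S.biUnion (fun γ => closedNbhd G γ) := by
  ext v
  simp only [closedNbhd, mem_union, mem_filter, mem_biUnion, mem_univ, true_and, id]
  aesop

lemma aux_main {V : Type*} [Fintype V] [DecidableEq V] (G : SimpleGraph V)
    [DecidableRel G.Adj] (n Δ : ℕ) (hΔ : 3 ≤ Δ)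
    (Γ₀ : Finset (Finset V))
    (hsize : ∀ γ ∈ Γ₀, (γ.card : ℝ) ≤ n / (3 * Δ))
    (hcompat : ∀ γ₁ ∈ Γ₀, ∀ γ₂ ∈ Γ₀, γ₁ ≠ γ₂ →
      Disjoint (closedNbhd G γ₁) (closedNbhd G γ₂))
    (hexp : ∀ S ⊆ Γ₀, (n : ℝ) / (6 * Δ) < ((S.biUnion id).card : ℝ) →
      ((S.biUnion id).card : ℝ) ≤ n / (3 * Δ) →
      ((Δ : ℝ) - 1) / 2 * (S.biUnion id).card ≤ (closedNbhd G (S.biUnion id)).card) :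
    ∀ Γ ⊆ Γ₀, ((Γ.biUnion id).card : ℝ) ≤
      n / (6 * Δ) + 2 / ((Δ : ℝ) - 1) * ((closedNbhd G (Γ.biUnion id)).card) := by
  classical
  have hD3 : (3:ℝ) ≤ (Δ:ℝ) := by exact_mod_cast hΔ
  have hD1 : (0:ℝ) < (Δ:ℝ) - 1 := by linarith
  have hDne : ((Δ:ℝ)) ≠ 0 := by linarith
  have hDne1 : ((Δ:ℝ) - 1) ≠ 0 := ne_of_gt hD1
  have hn : (0:ℝ) ≤ n := Nat.cast_nonneg n
  intro Γ
  induction Γ using Finset.strongInduction with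
  | _ Γ ih =>
    intro hΓ
    by_cases hle : ((Γ.biUnion id).card : ℝ) ≤ n / (6 * Δ)
    · have h0 : (0:ℝ) ≤ 2 / ((Δ:ℝ) - 1) * ((closedNbhd G (Γ.biUnion id)).card) := by
        positivity
      linarith
    push_neg at hle
    set P := Γ.powerset.filter (fun S => (n:ℝ) / (6 * Δ) < ((S.biUnion id).card : ℝ)) with hP
    have hΓP : Γ ∈ P := by
      rw [hP, mem_filter, mem_powerset]
      exact ⟨le_refl _, hle⟩
    obtain ⟨S, hSP, hSmin⟩ := P.exists_min_image (fun S => S.card) ⟨Γ, hΓP⟩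
    rw [hP, mem_filter, mem_powerset] at hSP
    obtain ⟨hSΓ, hSbig⟩ := hSP
    have hSne : S.Nonempty := by
      rcases S.eq_empty_or_nonempty with h | h
      · exfalso
        rw [h] at hSbig
        simp only [Finset.biUnion_empty, Finset.card_empty, Nat.cast_zero] at hSbig
        have : (0:ℝ) ≤ (n:ℝ)/(6*Δ) := by positivity
        linarith
      · exact h
    obtain ⟨γ, hγS⟩ := hSne
    have hγΓ₀ : γ ∈ Γ₀ := hΓ (hSΓ hγS)
    -- the erase has small total size by minimality
    have herase : (((S.erase γ).biUnion id).card : ℝ) ≤ (n:ℝ)/(6*Δ) := by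
      by_contra h
      push_neg at h
      have hmem : S.erase γ ∈ P := by
        rw [hP, mem_filter, mem_powerset]
        exact ⟨(erase_subset _ _).trans hSΓ, h⟩
      have h1 := hSmin _ hmem
      have h2 := card_erase_lt_of_mem hγS
      omega
    have hsub : S.biUnion id ⊆ ((S.erase γ).biUnion id) ∪ γ := by
      intro v hv
      rw [mem_biUnion] at hv
      obtain ⟨δ, hδ, hvδ⟩ := hv
      by_cases hδγ : δ = γ
      · exact mem_union_right _ (hδγ ▸ hvδ)
      · exact mem_union_left _ (mem_biUnion.mpr ⟨δ, mem_erase.mpr ⟨hδγ, hδ⟩, hvδ⟩)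
    have hTS : ((S.biUnion id).card : ℝ) ≤ (((S.erase γ).biUnion id).card : ℝ) + γ.card := by
      have := (card_le_card hsub).trans (card_union_le _ _)
      exact_mod_cast this
    -- the group S has total size at most n/(3Δ)
    have hTS_le : ((S.biUnion id).card : ℝ) ≤ (n:ℝ) / (3 * Δ) := by
      by_cases hγbig : (n:ℝ)/(6*Δ) < (γ.card : ℝ)
      · have hsingP : ({γ} : Finset (Finset V)) ∈ P := by
          rw [hP, mem_filter, mem_powerset]
          refine ⟨Finset.singleton_subset_iff.mpr (hSΓ hγS), ?_⟩
          rw [Finset.singleton_biUnion]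
          exact hγbig
        have h1 := hSmin _ hsingP
        simp only [Finset.card_singleton] at h1
        have hSeq : S = {γ} := by
          apply Finset.eq_singleton_iff_unique_mem.mpr
          refine ⟨hγS, ?_⟩
          intro x hx
          by_contra hne
          have : 1 < S.card := Finset.one_lt_card.mpr ⟨γ, hγS, x, hx, fun h => hne h.symm⟩
          omega
        rw [hSeq, Finset.singleton_biUnion]
        exact hsize γ hγΓ₀
      · push_neg at hγbig
        have heq : (n:ℝ)/(6*Δ) + (n:ℝ)/(6*Δ) = (n:ℝ)/(3*Δ) := by
          field_simp
          ring
        linarith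
    -- expansion for S
    have hexpS := hexp S (hSΓ.trans hΓ) hSbig hTS_le
    have hS2 : ((S.biUnion id).card : ℝ) ≤
        2 / ((Δ:ℝ) - 1) * ((closedNbhd G (S.biUnion id)).card) := by
      have hpos : (0:ℝ) < 2 / ((Δ:ℝ) - 1) := by positivity
      have h := mul_le_mul_of_nonneg_left hexpS (le_of_lt hpos)
      calc ((S.biUnion id).card : ℝ)
          = 2 / ((Δ:ℝ) - 1) * (((Δ:ℝ) - 1) / 2 * ((S.biUnion id).card : ℝ)) := by
            field_simp
        _ ≤ 2 / ((Δ:ℝ) - 1) * ((closedNbhd G (S.biUnion id)).card) := h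
    -- induction on Γ \ S
    have hssub : Γ \ S ⊂ Γ := by
      apply Finset.sdiff_ssubset hSΓ ⟨γ, hγS⟩
    have hih := ih (Γ \ S) hssub ((Finset.sdiff_subset).trans hΓ)
    have hun : ∀ (f : Finset V → Finset V),
        (Γ \ S).biUnion f ∪ S.biUnion f = Γ.biUnion f := by
      intro f
      ext v
      simp only [mem_union, mem_biUnion, Finset.mem_sdiff]
      constructor
      · rintro (⟨γ', ⟨h1, _⟩, h2⟩ | ⟨γ', h1, h2⟩)
        · exact ⟨γ', h1, h2⟩
        · exact ⟨γ', hSΓ h1, h2⟩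
      · rintro ⟨γ', h1, h2⟩
        by_cases h : γ' ∈ S
        · exact Or.inr ⟨γ', h, h2⟩
        · exact Or.inl ⟨γ', ⟨h1, h⟩, h2⟩
    -- neighborhood split
    have hNsplit : ((closedNbhd G ((Γ \ S).biUnion id)).card : ℝ) +
        ((closedNbhd G (S.biUnion id)).card : ℝ) ≤
        ((closedNbhd G (Γ.biUnion id)).card : ℝ) := by
      rw [closedNbhd_biUnion, closedNbhd_biUnion, closedNbhd_biUnion]
      have hdisj : Disjoint ((Γ \ S).biUnion (fun γ => closedNbhd G γ))
          (S.biUnion (fun γ => closedNbhd G γ)) := by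
        rw [Finset.disjoint_biUnion_left]
        intro γ₁ h₁
        rw [Finset.disjoint_biUnion_right]
        intro γ₂ h₂
        have hγ₁ : γ₁ ∈ Γ := (Finset.mem_sdiff.mp h₁).1
        have hγ₁n : γ₁ ∉ S := (Finset.mem_sdiff.mp h₁).2
        exact hcompat γ₁ (hΓ hγ₁) γ₂ (hΓ (hSΓ h₂)) (fun h => hγ₁n (h ▸ h₂))
      have hcard := Finset.card_union_of_disjoint hdisj
      rw [hun (fun γ => closedNbhd G γ)] at hcard
      exact_mod_cast le_of_eq hcard.symm
    -- total size split
    have hTsplit : ((Γ.biUnion id).card : ℝ) ≤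
        (((Γ \ S).biUnion id).card : ℝ) + ((S.biUnion id).card : ℝ) := by
      rw [← hun id]
      exact_mod_cast card_union_le _ _
    have hcnn : (0:ℝ) ≤ 2 / ((Δ:ℝ) - 1) := by positivity
    have hmul := mul_le_mul_of_nonneg_left hNsplit hcnn
    rw [mul_add] at hmul
    linarith

theorem stmt_14 {V : Type*} [Fintype V] [DecidableEq V] (G : SimpleGraph V)
    [DecidableRel G.Adj] (n Δ : ℕ) (hΔ : 3 ≤ Δ) (hV : Fintype.card V = 2 * n)
    (Γ : Finset (Finset V))
    (hsize : ∀ γ ∈ Γ, (γ.card : ℝ) ≤ n / (3 * Δ))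
    (hcompat : ∀ γ₁ ∈ Γ, ∀ γ₂ ∈ Γ, γ₁ ≠ γ₂ →
      Disjoint (closedNbhd G γ₁) (closedNbhd G γ₂))
    (hexp : ∀ S ⊆ Γ, (n : ℝ) / (6 * Δ) < ((S.biUnion id).card : ℝ) →
      ((S.biUnion id).card : ℝ) ≤ n / (3 * Δ) →
      ((Δ : ℝ) - 1) / 2 * (S.biUnion id).card ≤ (closedNbhd G (S.biUnion id)).card) :
    ((Γ.biUnion id).card : ℝ) ≤ 12 * n / Δ := by
  have hD3 : (3:ℝ) ≤ (Δ:ℝ) := by exact_mod_cast hΔ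
  have hD0 : (0:ℝ) < (Δ:ℝ) := by linarith
  have hD1 : (0:ℝ) < (Δ:ℝ) - 1 := by linarith
  have hn : (0:ℝ) ≤ n := Nat.cast_nonneg n
  have haux := aux_main G n Δ hΔ Γ hsize hcompat hexp Γ (le_refl _)
  have hN : ((closedNbhd G (Γ.biUnion id)).card : ℝ) ≤ 2 * n := by
    have h1 : (closedNbhd G (Γ.biUnion id)).card ≤ Fintype.card V :=
      Finset.card_le_univ _
    rw [hV] at h1
    exact_mod_cast h1
  have hcnn : (0:ℝ) ≤ 2 / ((Δ:ℝ) - 1) := by positivity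
  have hmul := mul_le_mul_of_nonneg_left hN hcnn
  have hfinal : (n:ℝ) / (6 * Δ) + 2 / ((Δ:ℝ) - 1) * (2 * n) ≤ 12 * n / Δ := by
    have key : (n:ℝ) / (6 * Δ) + 2 / ((Δ:ℝ) - 1) * (2 * n) =
        ((n:ℝ) * ((Δ:ℝ) - 1) + 24 * n * Δ) / (6 * Δ * ((Δ:ℝ) - 1)) := by
      field_simp
      ring
    rw [key, div_le_div_iff₀ (by positivity : (0:ℝ) < 6 * (Δ:ℝ) * ((Δ:ℝ) - 1)) hD0]
    have h2 : (0:ℝ) ≤ (n:ℝ) * Δ := by positivity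
    nlinarith [mul_le_mul_of_nonneg_left hD3 h2]
  linarith
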